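/- For a probability vector generated by temperature-scaled softmax, the entropy H(T) = −Σ_i p_i(T) log p_i(T) is a continuous and nondecreasing function of the temperature T > 0; hence for any target entropy level c with H(1) < c < log n there exists T_scale > 1 such that H(T_scale) = c (assuming not all logits are equal). -/

import Mathlib

open Real Finset Set

noncomputable def Zf {n : ℕ} (m : Fin n → ℝ) : ℝ → ℝ := fun β => ∑ i, Real.exp (β * m i)
noncomputable def S1f {n : ℕ} (m : Fin n → ℝ) : ℝ → ℝ := fun β => ∑ i, m i * Real.exp (β * m i)
noncomputable def S2f {n : ℕ} (m : Fin n → ℝ) : ℝ → ℝ := fun β => ∑ i, (m i)^2 * Real.exp (β * m i)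
noncomputable def Gf {n : ℕ} (m : Fin n → ℝ) : ℝ → ℝ :=
  fun β => Real.log (Zf m β) - β * S1f m β / Zf m β

lemma Zf_pos {n : ℕ} (m : Fin n → ℝ) (hn : 0 < n) (β : ℝ) : 0 < Zf m β := by
  have : Nonempty (Fin n) := Fin.pos_iff_nonempty.mp hn
  exact Finset.sum_pos (fun i _ => Real.exp_pos _) Finset.univ_nonempty

lemma hasDerivAt_Zf {n : ℕ} (m : Fin n → ℝ) (β : ℝ) :
    HasDerivAt (Zf m) (S1f m β) β := by
  have h : ∀ i : Fin n, HasDerivAt (fun b : ℝ => Real.exp (b * m i))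
      (m i * Real.exp (β * m i)) β := by
    intro i
    have := (hasDerivAt_mul_const (m i) (x := β)).exp
    simpa [mul_comm] using this
  exact HasDerivAt.fun_sum (u := Finset.univ) (fun i _ => h i)

lemma hasDerivAt_S1f {n : ℕ} (m : Fin n → ℝ) (β : ℝ) :
    HasDerivAt (S1f m) (S2f m β) β := by
  have h : ∀ i : Fin n, HasDerivAt (fun b : ℝ => m i * Real.exp (b * m i))
      ((m i)^2 * Real.exp (β * m i)) β := by
    intro i
    have h1 := (hasDerivAt_mul_const (m i) (x := β)).exp
    have := h1.const_mul (m i)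
    refine this.congr_deriv ?_
    ring
  exact HasDerivAt.fun_sum (u := Finset.univ) (fun i _ => h i)

lemma cs_ineq {n : ℕ} (m : Fin n → ℝ) (β : ℝ) :
    (S1f m β)^2 ≤ S2f m β * Zf m β := by
  have h := Finset.sum_mul_sq_le_sq_mul_sq Finset.univ
    (fun i : Fin n => m i * Real.exp (β * m i / 2))
    (fun i : Fin n => Real.exp (β * m i / 2))
  have e1 : ∀ i : Fin n, (m i * Real.exp (β * m i / 2)) * Real.exp (β * m i / 2)
      = m i * Real.exp (β * m i) := by
    intro i
    rw [mul_assoc, ← Real.exp_add]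
    ring_nf
  have e2 : ∀ i : Fin n, (m i * Real.exp (β * m i / 2))^2 = (m i)^2 * Real.exp (β * m i) := by
    intro i
    rw [mul_pow, sq (Real.exp _), ← Real.exp_add]
    ring_nf
  have e3 : ∀ i : Fin n, (Real.exp (β * m i / 2))^2 = Real.exp (β * m i) := by
    intro i
    rw [sq, ← Real.exp_add]
    ring_nf
  simp only [e1, e2, e3] at h
  simpa [S1f, S2f, Zf] using h

lemma hasDerivAt_Gf {n : ℕ} (m : Fin n → ℝ) (hn : 0 < n) (β : ℝ) :
    HasDerivAt (Gf m) (-(β * (S2f m β * Zf m β - (S1f m β)^2) / (Zf m β)^2)) β := by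
  have hZ := Zf_pos m hn β
  have hZ' := hasDerivAt_Zf m β
  have hS1 := hasDerivAt_S1f m β
  have hlog : HasDerivAt (fun b => Real.log (Zf m b)) (S1f m β / Zf m β) β :=
    hZ'.log hZ.ne'
  have hmul : HasDerivAt (fun b => b * S1f m b) (1 * S1f m β + β * S2f m β) β :=
    (hasDerivAt_id β).mul hS1
  have hdiv : HasDerivAt (fun b => b * S1f m b / Zf m b)
      (((1 * S1f m β + β * S2f m β) * Zf m β - β * S1f m β * S1f m β) / (Zf m β)^2) β :=
    hmul.div hZ' hZ.ne'
  have := hlog.sub hdiv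
  refine this.congr_deriv ?_
  field_simp
  ring

lemma Heq_aux {n : ℕ} (m : Fin n → ℝ) (hn : 0 < n) {T : ℝ} (hT : 0 < T) :
    -(∑ i, (Real.exp (m i / T) / ∑ j, Real.exp (m j / T)) *
        Real.log (Real.exp (m i / T) / ∑ j, Real.exp (m j / T))) = Gf m (1/T) := by
  have hβ : ∀ i : Fin n, m i / T = (1/T) * m i := fun i => by ring
  have hZpos := Zf_pos m hn (1/T)
  have hZ : (∑ j, Real.exp (m j / T)) = Zf m (1/T) := by
    unfold Zf; exact Finset.sum_congr rfl (fun j _ => by rw [hβ])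
  rw [hZ]
  have hterm : ∀ i : Fin n, (Real.exp (m i / T) / Zf m (1/T)) *
      Real.log (Real.exp (m i / T) / Zf m (1/T))
      = ((1/T) * (m i * Real.exp ((1/T) * m i))
          - Real.log (Zf m (1/T)) * Real.exp ((1/T) * m i)) / Zf m (1/T) := by
    intro i
    rw [hβ, Real.log_div (Real.exp_ne_zero _) hZpos.ne', Real.log_exp]
    field_simp
  rw [Finset.sum_congr rfl (fun i _ => hterm i), ← Finset.sum_div,
    Finset.sum_sub_distrib, ← Finset.mul_sum, ← Finset.mul_sum]
  have h2 : (∑ i : Fin n, m i * Real.exp ((1/T) * m i)) = S1f m (1/T) := rfl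
  have h3 : (∑ i : Fin n, Real.exp ((1/T) * m i)) = Zf m (1/T) := rfl
  rw [h2, h3, Gf]
  field_simp
  ring

/-- For the temperature-scaled softmax distribution with logits not all equal,
the entropy H(T) = −∑ᵢ pᵢ(T) log pᵢ(T) is continuous and nondecreasing in
T > 0, and for any target entropy c with H(1) < c < log n there exists
T_scale > 1 with H(T_scale) = c. -/
theorem softmax_entropy_continuous_monotone_and_attains
    (n : ℕ) (hn : 2 ≤ n) (m : Fin n → ℝ)
    (hne : ¬ ∀ i j : Fin n, m i = m j) :
    let H : ℝ → ℝ := fun T =>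
      -(∑ i, (Real.exp (m i / T) / ∑ j, Real.exp (m j / T)) *
          Real.log (Real.exp (m i / T) / ∑ j, Real.exp (m j / T)))
    ContinuousOn H (Set.Ioi 0) ∧
    MonotoneOn H (Set.Ioi 0) ∧
    ∀ c : ℝ, H 1 < c → c < Real.log n →
      ∃ T_scale : ℝ, 1 < T_scale ∧ H T_scale = c := by
  intro H
  have hn0 : 0 < n := by omega
  have hGdiff : Differentiable ℝ (Gf m) := fun β => (hasDerivAt_Gf m hn0 β).differentiableAt
  have hGc : Continuous (Gf m) := hGdiff.continuous
  have hanti : AntitoneOn (Gf m) (Set.Ici 0) := by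
    apply antitoneOn_of_deriv_nonpos (convex_Ici 0) hGc.continuousOn
      (fun x _ => hGdiff.differentiableAt.differentiableWithinAt)
    intro x hx
    rw [interior_Ici] at hx
    rw [(hasDerivAt_Gf m hn0 x).deriv]
    have h1 : 0 ≤ S2f m x * Zf m x - (S1f m x)^2 := sub_nonneg.mpr (cs_ineq m x)
    have : 0 ≤ x * (S2f m x * Zf m x - (S1f m x)^2) / (Zf m x)^2 :=
      div_nonneg (mul_nonneg hx.le h1) (sq_nonneg _)
    linarith
  have hHeq : Set.EqOn H (fun T => Gf m (1/T)) (Set.Ioi 0) :=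
    fun T hT => Heq_aux m hn0 hT
  have hcont : ContinuousOn H (Set.Ioi 0) := by
    have h1 : ContinuousOn (fun T : ℝ => Gf m (1/T)) (Set.Ioi 0) :=
      hGc.comp_continuousOn
        (continuousOn_const.div continuousOn_id (fun x hx => ne_of_gt hx))
    exact h1.congr hHeq
  refine ⟨hcont, ?_, ?_⟩
  · intro a ha b hb hab
    rw [hHeq ha, hHeq hb]
    exact hanti (Set.mem_Ici.mpr (one_div_nonneg.mpr (le_of_lt hb)))
      (Set.mem_Ici.mpr (one_div_nonneg.mpr (le_of_lt ha)))
      (one_div_le_one_div_of_le ha hab)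
  · intro c hc1 hc2
    have hG0 : Gf m 0 = Real.log n := by
      simp [Gf, Zf]
    have htend : Filter.Tendsto H Filter.atTop (nhds (Real.log n)) := by
      have h1 : Filter.Tendsto (fun T : ℝ => 1/T) Filter.atTop (nhds 0) := by
        simpa [one_div] using tendsto_inv_atTop_zero (𝕜 := ℝ)
      have h2 := (hGc.tendsto 0).comp h1
      rw [hG0] at h2
      apply h2.congr'
      filter_upwards [Filter.eventually_gt_atTop (0:ℝ)] with T hT
      exact (hHeq hT).symm
    have hev : ∀ᶠ T in Filter.atTop, c < H T := htend.eventually (eventually_gt_nhds hc2)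
    obtain ⟨T0, hT0⟩ := Filter.eventually_atTop.mp hev
    set T2 := max T0 2 with hT2def
    have hT2gt : c < H T2 := hT0 T2 (le_max_left _ _)
    have h1T2 : (1:ℝ) ≤ T2 := le_trans (by norm_num) (le_max_right T0 2)
    have hsub : Set.Icc (1:ℝ) T2 ⊆ Set.Ioi 0 := fun x hx => lt_of_lt_of_le zero_lt_one hx.1
    have hivt := intermediate_value_Icc h1T2 (hcont.mono hsub)
    obtain ⟨T, hTmem, hTc⟩ := hivt ⟨hc1.le, hT2gt.le⟩
    refine ⟨T, ?_, hTc⟩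
    rcases eq_or_lt_of_le hTmem.1 with h | h
    · exfalso; rw [← h] at hTc; linarith
    · exact h
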